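/- There is an absolute constant C > 0 such that for every integer λ ≥ 1 and every finite simple edge-colored graph G on n vertices, G has a subgraph H with at most C·λ·n edges such that for every set F of at most λ colors and all vertices u, v, u and v are connected in H−F if and only if they are connected in G−F. -/

import Mathlib

open SimpleGraph

private lemma reach_lift {V : Type} {K L : SimpleGraph V}
    (h : ∀ a b : V, L.Adj a b → K.Reachable a b) {u v : V} (hr : L.Reachable u v) :
    K.Reachable u v := by
  obtain ⟨w⟩ := hr
  induction w with
  | nil => exact Reachable.refl _
  | cons ha _ ih => exact (h _ _ ha).trans ih


private lemma support_dist_le {V : Type} [DecidableEq V] {Γ : SimpleGraph V} {A B : V}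
    (p : Γ.Walk A B) {y : V} (hy : y ∈ p.support) : Γ.dist A y ≤ p.length :=
  le_trans (Γ.dist_le (p.takeUntil y hy)) (Walk.length_takeUntil_le p hy)

private lemma acyclic_ncard_le {V : Type} [Fintype V] {Γ : SimpleGraph V}
    (hΓ : Γ.IsAcyclic) : Γ.edgeSet.ncard ≤ Fintype.card V := by
  classical
  by_cases hne : Γ.edgeSet = ∅
  · simp [hne]
  obtain ⟨e₀, he₀⟩ := Set.nonempty_iff_ne_empty.2 hne
  have hV : Nonempty V := by
    induction e₀ using Sym2.ind with
    | _ a b => exact ⟨a⟩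
  set r : V → V := fun x => (Γ.connectedComponentMk x).out with hrdef
  have hreach : ∀ x : V, Γ.Reachable (r x) x := by
    intro x
    exact ConnectedComponent.exact (Quot.out_eq _)
  have hradj : ∀ {a b : V}, Γ.Adj a b → r a = r b := by
    intro a b hab
    simp only [hrdef]
    rw [ConnectedComponent.sound hab.reachable]
  have key : ∀ (root a x : V), Γ.Adj a x → Γ.Reachable root a →
      Γ.dist root a ≠ Γ.dist root x := by
    intro root a x hax hra heq
    have hrx : Γ.Reachable root x := hra.trans hax.reachable
    obtain ⟨pa, hpa, hla⟩ := hra.exists_path_of_dist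
    obtain ⟨px, hpx, hlx⟩ := hrx.exists_path_of_dist
    have hxs : x ∉ pa.support := by
      intro hxs
      have h1 : Γ.dist root x ≤ (pa.takeUntil x hxs).length := Γ.dist_le _
      have h2 : (pa.takeUntil x hxs).length + (pa.dropUntil x hxs).length = pa.length := by
        rw [← Walk.length_append, Walk.take_spec]
      have h3 : (pa.dropUntil x hxs).length ≠ 0 := by
        intro h0
        exact hax.ne' (Walk.eq_of_length_eq_zero h0)
      omega
    have hq : (pa.concat hax).IsPath := by
      rw [← Walk.isPath_reverse_iff, Walk.reverse_concat, Walk.cons_isPath_iff]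
      refine ⟨(Walk.isPath_reverse_iff _).2 hpa, ?_⟩
      rw [Walk.support_reverse, List.mem_reverse]
      exact hxs
    have heqp := hΓ.path_unique ⟨px, hpx⟩ ⟨pa.concat hax, hq⟩
    have hlen : px.length = (pa.concat hax).length := by
      rw [Subtype.ext_iff] at heqp
      simp only at heqp
      rw [heqp]
    rw [Walk.length_concat] at hlen
    omega
  have spec : ∀ e ∈ Γ.edgeSet, ∃ p : V × V, e = s(p.1, p.2) ∧ Γ.Adj p.1 p.2 ∧
      Γ.dist (r p.2) p.1 + 1 = Γ.dist (r p.2) p.2 := by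
    intro e he
    induction e using Sym2.ind with
    | _ a b =>
      have hab : Γ.Adj a b := he
      have hroots : r a = r b := hradj hab
      have hne' := key (r a) a b hab (hreach a)
      rcases lt_or_gt_of_ne hne' with h | h
      · refine ⟨(a, b), rfl, hab, ?_⟩
        show Γ.dist (r b) a + 1 = Γ.dist (r b) b
        have hle : Γ.dist (r a) b ≤ Γ.dist (r a) a + 1 := by
          obtain ⟨pa, hpa, hla⟩ := (hreach a).exists_path_of_dist
          have := Γ.dist_le (pa.concat hab)
          rwa [Walk.length_concat, hla] at this
        rw [← hroots]
        omega
      · refine ⟨(b, a), Sym2.eq_swap, hab.symm, ?_⟩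
        show Γ.dist (r a) b + 1 = Γ.dist (r a) a
        have hle : Γ.dist (r a) a ≤ Γ.dist (r a) b + 1 := by
          obtain ⟨pb, hpb, hlb⟩ := ((hreach a).trans hab.reachable).exists_path_of_dist
          have := Γ.dist_le (pb.concat hab.symm)
          rwa [Walk.length_concat, hlb] at this
        omega
  inhabit V
  set f : Sym2 V → V := fun e => if he : e ∈ Γ.edgeSet then ((spec e he).choose).2 else default
    with hfdef
  have hinj : Set.InjOn f Γ.edgeSet := by
    intro e₁ he₁ e₂ he₂ hfeq
    simp only [hfdef, dif_pos he₁, dif_pos he₂] at hfeq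
    obtain ⟨hrep₁, hadj₁, hd₁⟩ := (spec e₁ he₁).choose_spec
    obtain ⟨hrep₂, hadj₂, hd₂⟩ := (spec e₂ he₂).choose_spec
    set a₁ := ((spec e₁ he₁).choose).1
    set x := ((spec e₁ he₁).choose).2
    set a₂ := ((spec e₂ he₂).choose).1
    have hx2 : ((spec e₂ he₂).choose).2 = x := hfeq.symm
    rw [hx2] at hrep₂ hadj₂ hd₂
    set root := r x with hrootdef
    have hrootx : Γ.Reachable root x := hreach x
    have build : ∀ (a : V), Γ.Adj a x → Γ.dist root a + 1 = Γ.dist root x →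
        ∃ p : Γ.Walk root a, p.IsPath ∧ x ∉ p.support ∧ p.length = Γ.dist root a := by
      intro a hax hd
      have hra : Γ.Reachable root a := hrootx.trans hax.reachable.symm
      obtain ⟨p, hp, hl⟩ := hra.exists_path_of_dist
      refine ⟨p, hp, ?_, hl⟩
      intro hxs
      have := support_dist_le p hxs
      rw [hl] at this
      omega
    obtain ⟨p₁, hp₁, hxs₁, _⟩ := build a₁ hadj₁ hd₁
    obtain ⟨p₂, hp₂, hxs₂, _⟩ := build a₂ hadj₂ hd₂
    have hq₁ : (p₁.concat hadj₁).IsPath := by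
      rw [← Walk.isPath_reverse_iff, Walk.reverse_concat, Walk.cons_isPath_iff]
      exact ⟨(Walk.isPath_reverse_iff _).2 hp₁, by
        rw [Walk.support_reverse, List.mem_reverse]; exact hxs₁⟩
    have hq₂ : (p₂.concat hadj₂).IsPath := by
      rw [← Walk.isPath_reverse_iff, Walk.reverse_concat, Walk.cons_isPath_iff]
      exact ⟨(Walk.isPath_reverse_iff _).2 hp₂, by
        rw [Walk.support_reverse, List.mem_reverse]; exact hxs₂⟩
    have hqq : p₁.concat hadj₁ = p₂.concat hadj₂ := by
      have := hΓ.path_unique ⟨p₁.concat hadj₁, hq₁⟩ ⟨p₂.concat hadj₂, hq₂⟩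
      rwa [Subtype.ext_iff] at this
    have hrev : Walk.cons hadj₁.symm p₁.reverse = Walk.cons hadj₂.symm p₂.reverse := by
      have : (p₁.concat hadj₁).reverse = (p₂.concat hadj₂).reverse := by rw [hqq]
      rwa [Walk.reverse_concat, Walk.reverse_concat] at this
    have ha : a₁ = a₂ := by injection hrev
    rw [hrep₁, hrep₂, ha]
  calc Γ.edgeSet.ncard ≤ (Set.univ : Set V).ncard :=
        Set.ncard_le_ncard_of_injOn f (fun a _ => Set.mem_univ _) hinj (Set.toFinite _)
    _ = Fintype.card V := by rw [Set.ncard_univ, Nat.card_eq_fintype_card]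

private lemma cft_count {V : Type} [Fintype V] {𝒞 : Type} (c : Sym2 V → 𝒞) (lam : ℕ)
    (H : SimpleGraph V) (x y : Sym2 V → V) (F : Sym2 V → Finset 𝒞)
    (hrep : ∀ e ∈ H.edgeSet, e = s(x e, y e))
    (hcard : ∀ e ∈ H.edgeSet, (F e).card ≤ lam)
    (hnm : ∀ e ∈ H.edgeSet, c e ∉ F e)
    (hbr : ∀ e ∈ H.edgeSet,
      ¬ (H.deleteEdges ({e' | c e' ∈ F e} ∪ {e})).Reachable (x e) (y e)) :
    H.edgeSet.ncard ≤ (lam + 1) * Fintype.card V := by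
  classical
  have hEfin : H.edgeSet.Finite := Set.toFinite _
  set E : Finset (Sym2 V) := hEfin.toFinset with hEdef
  have hmemE : ∀ {e : Sym2 V}, e ∈ E ↔ e ∈ H.edgeSet := fun {e} => hEfin.mem_toFinset
  set colors' : Finset 𝒞 := E.image c with hcolorsdef
  set k := colors'.card with hkdef
  set α := {a : 𝒞 // a ∈ colors'} with hαdef
  have hcardα : Fintype.card α = k := Fintype.card_coe _
  have hΩne : Nonempty (α ≃ Fin k) := ⟨Fintype.equivFinOfCardEq hcardα⟩
  set rk : (α ≃ Fin k) → 𝒞 → ℕ :=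
    fun g a => if h : a ∈ colors' then (g ⟨a, h⟩ : ℕ) else k with hrkdef
  set Good : (α ≃ Fin k) → Sym2 V → Prop :=
    fun g e => ∀ f ∈ F e, rk g (c e) < rk g f with hGooddef
  -- Claim A : for each order g, the good edges form a forest
  have claimA : ∀ g : α ≃ Fin k, (E.filter (fun e => Good g e)).card ≤ Fintype.card V := by
    intro g
    set T := E.filter (fun e => Good g e) with hTdef
    have hTnodiag : ∀ e ∈ T, ¬ e.IsDiag := by
      intro e he
      exact H.not_isDiag_of_mem_edgeSet (hmemE.1 (Finset.mem_filter.1 he).1)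
    have hacyc : (fromEdgeSet (T : Set (Sym2 V))).IsAcyclic := by
      intro v p hp
      have hlen3 := hp.three_le_length
      have hedne : ∃ f, f ∈ p.edges := by
        apply List.exists_mem_of_ne_nil
        intro h0
        have hl := p.length_edges
        rw [h0] at hl
        simp at hl
        omega
      have hsubT : ∀ f ∈ p.edges, f ∈ T := by
        intro f hf
        have := p.edges_subset_edgeSet hf
        rw [edgeSet_fromEdgeSet] at this
        exact Finset.mem_coe.1 this.1
      obtain ⟨f₀, hf₀⟩ := hedne
      obtain ⟨estar, hesmem, hemax⟩ := Finset.exists_max_image p.edges.toFinset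
        (fun e => rk g (c e)) ⟨f₀, List.mem_toFinset.2 hf₀⟩
      have hesedges : estar ∈ p.edges := List.mem_toFinset.1 hesmem
      have hesT : estar ∈ T := hsubT _ hesedges
      have hesE : estar ∈ H.edgeSet := hmemE.1 (Finset.mem_filter.1 hesT).1
      set Γ' := fromEdgeSet ((T.filter (fun e => rk g (c e) ≤ rk g (c estar)) : Finset _) :
        Set (Sym2 V)) with hΓ'def
      have hpe : ∀ f ∈ p.edges, f ∈ Γ'.edgeSet := by
        intro f hf
        rw [hΓ'def, edgeSet_fromEdgeSet]
        refine ⟨Finset.mem_coe.2 (Finset.mem_filter.2 ⟨hsubT f hf, ?_⟩), hTnodiag f (hsubT f hf)⟩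
        exact hemax f (List.mem_toFinset.2 hf)
      set p' := p.transfer Γ' hpe with hp'def
      have hp'c : p'.IsCycle := hp.transfer hpe
      have hesp' : estar ∈ p'.edges := by
        rw [hp'def, Walk.edges_transfer]
        exact hesedges
      have hxyrep := hrep estar hesE
      have hcyc : ∃ (u : V) (q : Γ'.Walk u u), q.IsCycle ∧ s(x estar, y estar) ∈ q.edges :=
        ⟨v, p', hp'c, by rw [← hxyrep]; exact hesp'⟩
      have hadjreach := adj_and_reachable_delete_edges_iff_exists_cycle.mpr hcyc
      apply hbr estar hesE
      refine Reachable.mono ?_ hadjreach.2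
      intro a b hab
      change (Γ' \ fromEdgeSet {s(x estar, y estar)}).Adj a b at hab
      rw [sdiff_adj] at hab
      obtain ⟨h1, h2⟩ := hab
      rw [hΓ'def, fromEdgeSet_adj] at h1
      obtain ⟨h1m, hne⟩ := h1
      have h1m' := Finset.mem_coe.1 h1m
      rw [Finset.mem_filter] at h1m'
      obtain ⟨habT, habrk⟩ := h1m'
      rw [hTdef, Finset.mem_filter] at habT
      obtain ⟨habE, habGood⟩ := habT
      have hadjH : H.Adj a b := (SimpleGraph.mem_edgeSet H).1 (hmemE.1 habE)
      have hnestar : s(a, b) ≠ estar := by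
        intro heq
        rw [fromEdgeSet_adj] at h2
        exact h2 ⟨by rw [Set.mem_singleton_iff, heq]; exact hxyrep, hne⟩
      rw [deleteEdges_adj]
      refine ⟨hadjH, ?_⟩
      rintro (hcol | hsing)
      · have hGoodstar : Good g estar := (Finset.mem_filter.1 hesT).2
        have := hGoodstar (c s(a, b)) hcol
        omega
      · exact hnestar hsing
    have hedgeeq : (fromEdgeSet (T : Set (Sym2 V))).edgeSet = (T : Set (Sym2 V)) := by
      rw [edgeSet_fromEdgeSet]
      ext f
      simp only [Set.mem_diff, Set.mem_setOf_eq, Finset.mem_coe, and_iff_left_iff_imp]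
      intro hf
      exact hTnodiag f hf
    have := acyclic_ncard_le hacyc
    rwa [hedgeeq, Set.ncard_coe_finset] at this
  -- Claim B : each edge is good for many orders
  have claimB : ∀ e ∈ E, Fintype.card (α ≃ Fin k) ≤
      (lam + 1) * (Finset.univ.filter (fun g : α ≃ Fin k => Good g e)).card := by
    intro e he
    have heset : e ∈ H.edgeSet := hmemE.1 he
    have hce : c e ∈ colors' := Finset.mem_image_of_mem c he
    set s₀ : α := ⟨c e, hce⟩ with hs₀def
    set S : Finset α := Finset.univ.filter (fun a : α => (a : 𝒞) = c e ∨ (a : 𝒞) ∈ F e)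
      with hSdef
    have hs₀S : s₀ ∈ S := by simp [hSdef, hs₀def]
    have hScard : S.card ≤ lam + 1 := by
      have hmaps : ∀ a ∈ S, (a : 𝒞) ∈ insert (c e) (F e) := by
        intro a ha
        rw [hSdef, Finset.mem_filter] at ha
        rcases ha.2 with h | h
        · exact Finset.mem_insert.2 (Or.inl h)
        · exact Finset.mem_insert.2 (Or.inr h)
      calc S.card ≤ (insert (c e) (F e)).card :=
            Finset.card_le_card_of_injOn _ hmaps (Subtype.coe_injective.injOn)
        _ ≤ (F e).card + 1 := Finset.card_insert_le _ _
        _ ≤ lam + 1 := by have := hcard e heset; omega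
    set A : α → Finset (α ≃ Fin k) :=
      fun s => Finset.univ.filter (fun g => ∀ t ∈ S, t ≠ s → g s < g t) with hAdef
    have memA : ∀ (s : α) (g : α ≃ Fin k), g ∈ A s ↔ ∀ t ∈ S, t ≠ s → g s < g t := by
      intro s g
      rw [hAdef]
      simp [Finset.mem_filter]
    have hcover : ∀ g : α ≃ Fin k, ∃ s ∈ S, g ∈ A s := by
      intro g
      obtain ⟨s, hsS, hmin⟩ := Finset.exists_min_image S (fun t => g t) ⟨s₀, hs₀S⟩
      refine ⟨s, hsS, (memA s g).2 fun t htS hts => ?_⟩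
      exact lt_of_le_of_ne (hmin t htS) (fun hc => hts (g.injective hc).symm)
    have hdisj : ∀ s₁ ∈ S, ∀ s₂ ∈ S, s₁ ≠ s₂ →
        Disjoint (A s₁) (A s₂) := by
      intro s₁ _ s₂ _ hne
      rw [Finset.disjoint_left]
      intro g hg1 hg2
      rw [memA] at hg1 hg2
      have h1 := hg1 s₂ (by assumption) hne.symm
      have h2 := hg2 s₁ (by assumption) hne
      exact absurd (h1.trans h2) (lt_irrefl _)
    have hunion : S.biUnion A = Finset.univ := by
      apply Finset.eq_univ_of_forall
      intro g
      rw [Finset.mem_biUnion]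
      exact hcover g
    have hsizes : ∀ s ∈ S, (A s).card = (A s₀).card := by
      intro s hsS
      by_cases hs : s = s₀
      · rw [hs]
      refine Finset.card_bij' (fun g _ => (Equiv.swap s s₀).trans g)
        (fun g _ => (Equiv.swap s s₀).trans g) ?_ ?_ ?_ ?_
      · intro g hg
        rw [memA] at hg
        show (Equiv.swap s s₀).trans g ∈ A s₀
        rw [memA]
        intro t htS hts₀
        have hval : ((Equiv.swap s s₀).trans g) s₀ = g s := by
          simp [Equiv.swap_apply_right]
        rw [hval]
        by_cases hts : t = s
        · have h' : ((Equiv.swap s s₀).trans g) t = g s₀ := by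
            rw [hts]
            simp [Equiv.swap_apply_left]
          rw [h']
          exact hg s₀ hs₀S (Ne.symm hs)
        · have h' : ((Equiv.swap s s₀).trans g) t = g t := by
            simp [Equiv.swap_apply_of_ne_of_ne hts hts₀]
          rw [h']
          exact hg t htS hts
      · intro g hg
        rw [memA] at hg
        show (Equiv.swap s s₀).trans g ∈ A s
        rw [memA]
        intro t htS hts
        have hval : ((Equiv.swap s s₀).trans g) s = g s₀ := by
          simp [Equiv.swap_apply_left]
        rw [hval]
        by_cases hts₀ : t = s₀
        · have h' : ((Equiv.swap s s₀).trans g) t = g s := by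
            rw [hts₀]
            simp [Equiv.swap_apply_right]
          rw [h']
          exact hg s hsS hs
        · have h' : ((Equiv.swap s s₀).trans g) t = g t := by
            simp [Equiv.swap_apply_of_ne_of_ne hts hts₀]
          rw [h']
          exact hg t htS hts₀
      · intro g _
        show (Equiv.swap s s₀).trans ((Equiv.swap s s₀).trans g) = g
        ext a
        simp
      · intro g _
        show (Equiv.swap s s₀).trans ((Equiv.swap s s₀).trans g) = g
        ext a
        simp
    have hcardeq : Fintype.card (α ≃ Fin k) = S.card * (A s₀).card := by
      rw [← Finset.card_univ, ← hunion, Finset.card_biUnion hdisj]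
      rw [Finset.sum_congr rfl hsizes, Finset.sum_const, smul_eq_mul]
    have hAGood : A s₀ = Finset.univ.filter (fun g : α ≃ Fin k => Good g e) := by
      ext g
      rw [memA, Finset.mem_filter]
      simp only [Finset.mem_univ, true_and]
      constructor
      · intro hmin f hf
        have hrkce : rk g (c e) = (g s₀ : ℕ) := by
          rw [hrkdef]
          simp only [dif_pos hce]
          rfl
        by_cases hfc : f ∈ colors'
        · have : rk g f = (g ⟨f, hfc⟩ : ℕ) := by
            rw [hrkdef]; simp only [dif_pos hfc]
          rw [this, hrkce]
          have htne : (⟨f, hfc⟩ : α) ≠ s₀ := by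
            intro hc
            apply hnm e heset
            have : f = c e := by
              simpa [hs₀def] using congrArg Subtype.val hc
            rwa [← this]
          have htS : (⟨f, hfc⟩ : α) ∈ S := by
            rw [hSdef, Finset.mem_filter]
            exact ⟨Finset.mem_univ _, Or.inr hf⟩
          exact_mod_cast hmin _ htS htne
        · have : rk g f = k := by
            rw [hrkdef]; simp only [dif_neg hfc]
          rw [this, hrkce]
          exact (g s₀).is_lt
      · intro hGood t htS hts₀
        rw [hSdef, Finset.mem_filter] at htS
        rcases htS.2 with h | h
        · exact absurd (Subtype.ext h) hts₀
        · have := hGood (t : 𝒞) h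
          have hrkce : rk g (c e) = (g s₀ : ℕ) := by
            rw [hrkdef]; simp only [dif_pos hce]
            rfl
          have hrkt : rk g (t : 𝒞) = (g t : ℕ) := by
            rw [hrkdef]
            simp only [dif_pos t.2]
            rfl
          rw [hrkce, hrkt] at this
          exact_mod_cast this
    rw [hcardeq, hAGood]
    exact Nat.mul_le_mul_right _ hScard
  -- double counting
  have hswap : ∑ g : α ≃ Fin k, (E.filter (fun e => Good g e)).card
      = ∑ e ∈ E, (Finset.univ.filter (fun g : α ≃ Fin k => Good g e)).card := by
    simp_rw [Finset.card_filter]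
    rw [Finset.sum_comm]
  have hup : ∑ g : α ≃ Fin k, (E.filter (fun e => Good g e)).card
      ≤ Fintype.card (α ≃ Fin k) * Fintype.card V := by
    calc ∑ g : α ≃ Fin k, (E.filter (fun e => Good g e)).card
        ≤ ∑ _g : α ≃ Fin k, Fintype.card V := Finset.sum_le_sum fun g _ => claimA g
      _ = Fintype.card (α ≃ Fin k) * Fintype.card V := by
          rw [Finset.sum_const, smul_eq_mul, Finset.card_univ]
  have hlow : E.card * Fintype.card (α ≃ Fin k)
      ≤ (lam + 1) * ∑ e ∈ E, (Finset.univ.filter (fun g : α ≃ Fin k => Good g e)).card := by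
    rw [Finset.mul_sum]
    calc E.card * Fintype.card (α ≃ Fin k)
        = ∑ _e ∈ E, Fintype.card (α ≃ Fin k) := by rw [Finset.sum_const, smul_eq_mul]
      _ ≤ _ := Finset.sum_le_sum claimB
  have hfinal : E.card ≤ (lam + 1) * Fintype.card V := by
    have hpos : 0 < Fintype.card (α ≃ Fin k) := Fintype.card_pos
    have := calc E.card * Fintype.card (α ≃ Fin k)
        ≤ (lam + 1) * ∑ e ∈ E, (Finset.univ.filter (fun g : α ≃ Fin k => Good g e)).card :=
          hlow
      _ = (lam + 1) * ∑ g : α ≃ Fin k, (E.filter (fun e => Good g e)).card := by rw [hswap]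
      _ ≤ (lam + 1) * (Fintype.card (α ≃ Fin k) * Fintype.card V) :=
          Nat.mul_le_mul_left _ hup
      _ = ((lam + 1) * Fintype.card V) * Fintype.card (α ≃ Fin k) := by ring
    exact Nat.le_of_mul_le_mul_right this hpos
  rw [Set.ncard_eq_toFinset_card _ hEfin]
  exact hfinal

/-- `λ`-CFT connectivity certificates of size `O(λn)` for edge-colored
graphs. -/
theorem stmt_4 :
    ∃ C : ℝ, 0 < C ∧
      ∀ (lam : ℕ), 1 ≤ lam →
        ∀ (V : Type) [Fintype V] (𝒞 : Type) (G : SimpleGraph V) (c : Sym2 V → 𝒞),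
          ∃ H : SimpleGraph V, H ≤ G ∧
            (H.edgeSet.ncard : ℝ) ≤ C * lam * (Fintype.card V : ℝ) ∧
            ∀ F : Finset 𝒞, F.card ≤ lam → ∀ u v : V,
              (H.deleteEdges {e | c e ∈ F}).Reachable u v ↔
                (G.deleteEdges {e | c e ∈ F}).Reachable u v := by
  classical
  refine ⟨2, by norm_num, ?_⟩
  intro lam hlam V _ 𝒞 G c
  set valid : SimpleGraph V → Prop := fun H => H ≤ G ∧
    ∀ F : Finset 𝒞, F.card ≤ lam → ∀ u v : V,
      (H.deleteEdges {e | c e ∈ F}).Reachable u v ↔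
        (G.deleteEdges {e | c e ∈ F}).Reachable u v with hvaliddef
  have hGvalid : valid G := ⟨le_refl G, fun F hF u v => Iff.rfl⟩
  have hex : ∃ n : ℕ, ∃ H, valid H ∧ H.edgeSet.ncard = n := ⟨_, G, hGvalid, rfl⟩
  obtain ⟨H, hHvalid, hHcard⟩ := Nat.find_spec hex
  -- essential property of the minimal certificate
  have hess : ∀ e ∈ H.edgeSet, ∃ u v : V, ∃ Fe : Finset 𝒞, e = s(u, v) ∧ Fe.card ≤ lam ∧
      c e ∉ Fe ∧ ¬ (H.deleteEdges ({e' | c e' ∈ Fe} ∪ {e})).Reachable u v := by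
    intro e he
    induction e using Sym2.ind with
    | _ u v =>
      by_contra hcon
      push_neg at hcon
      have hcon' : ∀ Fe : Finset 𝒞, Fe.card ≤ lam → c s(u, v) ∉ Fe →
          (H.deleteEdges ({e' | c e' ∈ Fe} ∪ {s(u, v)})).Reachable u v := by
        intro Fe h1 h2
        have := hcon u v Fe rfl h1 h2
        exact this
      set H' := H.deleteEdges {s(u, v)} with hH'def
      have hH'valid : valid H' := by
        constructor
        · exact le_trans (H.deleteEdges_le _) hHvalid.1
        · intro F hF a b
          constructor
          · intro hr
            apply (hHvalid.2 F hF a b).1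
            refine Reachable.mono ?_ hr
            intro p q hpq
            rw [deleteEdges_adj] at hpq ⊢
            exact ⟨(deleteEdges_adj.1 hpq.1).1, hpq.2⟩
          · intro hr
            have hrH := (hHvalid.2 F hF a b).2 hr
            refine reach_lift (K := H'.deleteEdges {e | c e ∈ F})
              (L := H.deleteEdges {e | c e ∈ F}) ?_ hrH
            intro p q hpq
            rw [deleteEdges_adj] at hpq
            obtain ⟨hpqH, hpqF⟩ := hpq
            by_cases hpe : s(p, q) = s(u, v)
            · have hcF : c s(u, v) ∉ F := by
                rw [← hpe]
                exact hpqF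
              have hgeq : H'.deleteEdges {e | c e ∈ F}
                  = H.deleteEdges ({e' | c e' ∈ F} ∪ {s(u, v)}) := by
                rw [hH'def, deleteEdges_deleteEdges, Set.union_comm]
              rw [hgeq]
              have hre := hcon' F hF hcF
              rcases Sym2.eq_iff.1 hpe with ⟨hp, hq⟩ | ⟨hp, hq⟩
              · rw [hp, hq]; exact hre
              · rw [hp, hq]; exact hre.symm
            · apply Adj.reachable
              rw [deleteEdges_adj, hH'def, deleteEdges_adj]
              exact ⟨⟨hpqH, by simpa using hpe⟩, hpqF⟩
      have hlt : H'.edgeSet.ncard < Nat.find hex := by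
        rw [← hHcard, hH'def, edgeSet_deleteEdges]
        exact Set.ncard_diff_singleton_lt_of_mem he (Set.toFinite _)
      exact Nat.find_min hex hlt ⟨H', hH'valid, rfl⟩
  -- apply the counting lemma
  have hbound : H.edgeSet.ncard ≤ (lam + 1) * Fintype.card V := by
    by_cases hE0 : H.edgeSet = ∅
    · rw [hE0]
      simp
    · obtain ⟨e₀, he₀⟩ := Set.nonempty_iff_ne_empty.2 hE0
      have hV : Nonempty V := by
        induction e₀ using Sym2.ind with
        | _ a b => exact ⟨a⟩
      inhabit V
      have hchoice : ∀ e : Sym2 V, ∃ p : V × V, ∃ Fe : Finset 𝒞, e ∈ H.edgeSet →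
          e = s(p.1, p.2) ∧ Fe.card ≤ lam ∧ c e ∉ Fe ∧
            ¬ (H.deleteEdges ({e' | c e' ∈ Fe} ∪ {e})).Reachable p.1 p.2 := by
        intro e
        by_cases he : e ∈ H.edgeSet
        · obtain ⟨u, v, Fe, h1, h2, h3, h4⟩ := hess e he
          exact ⟨(u, v), Fe, fun _ => ⟨h1, h2, h3, h4⟩⟩
        · exact ⟨(default, default), ∅, fun h => absurd h he⟩
      choose pf Ff hprop using hchoice
      exact cft_count c lam H (fun e => (pf e).1) (fun e => (pf e).2) Ff
        (fun e he => (hprop e he).1) (fun e he => (hprop e he).2.1)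
        (fun e he => (hprop e he).2.2.1) (fun e he => (hprop e he).2.2.2)
  refine ⟨H, hHvalid.1, ?_, hHvalid.2⟩
  have h1 : (H.edgeSet.ncard : ℝ) ≤ ((lam + 1) * Fintype.card V : ℕ) := by
    exact_mod_cast hbound
  have h2 : (1 : ℝ) ≤ (lam : ℝ) := by exact_mod_cast hlam
  have h3 : (0 : ℝ) ≤ (Fintype.card V : ℝ) := Nat.cast_nonneg _
  push_cast at h1
  nlinarith
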